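/- arXiv:1606.07749 — 4 statements merged into one kernel-verified Lean document; each statement's English description precedes it below -/
import Mathlib

section
/- Let I be a symmetric positive definite k×k real matrix, Ṡ a d×k real matrix of full rank d with d < k, and L a k×(k−d) real matrix whose columns form a basis of the kernel of Ṡ (equivalently, of the orthogonal complement of the row space of Ṡ). Then L (Lᵀ I L)⁻¹ Lᵀ I + I⁻¹ Ṡᵀ (Ṡ I⁻¹ Ṡᵀ)⁻¹ Ṡ equals the k×k identity matrix. -/
open Matrix

lemma posDef_transpose_mul_mul {n m : Type*} [Fintype n] [Fintype m]
    {A : Matrix n n ℝ} (hA : A.PosDef) (B : Matrix n m ℝ)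
    (hB : Function.Injective B.mulVec) : (Bᵀ * A * B).PosDef := by
  rw [← conjTranspose_eq_transpose_of_trivial]
  refine PosDef.of_dotProduct_mulVec_pos ?_ ?_
  · exact isHermitian_conjTranspose_mul_mul B hA.1
  · intro x hx
    have hBx : B *ᵥ x ≠ 0 := fun h => hx (hB (h.trans (B.mulVec_zero).symm))
    simpa only [star_mulVec, dotProduct_mulVec, vecMul_vecMul] using hA.dotProduct_mulVec_pos hBx

/-- If `I` is symmetric positive definite, `Ṡ` is `d×k` of full rank `d < k`, and the
columns of `L` form a basis of the kernel of `Ṡ`, then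
`L (Lᵀ I L)⁻¹ Lᵀ I + I⁻¹ Ṡᵀ (Ṡ I⁻¹ Ṡᵀ)⁻¹ Ṡ` is the identity. -/
theorem projection_decomposition_eq_one
    {k d : ℕ} (hdk : d < k)
    (I : Matrix (Fin k) (Fin k) ℝ) (hI : I.PosDef)
    (S : Matrix (Fin d) (Fin k) ℝ) (hSrank : S.rank = d)
    (L : Matrix (Fin k) (Fin (k - d)) ℝ)
    (hLinj : Function.Injective L.mulVec)
    (hLker : Set.range L.mulVec = {v | S.mulVec v = 0}) :
    L * (Lᵀ * I * L)⁻¹ * Lᵀ * I + I⁻¹ * Sᵀ * (S * I⁻¹ * Sᵀ)⁻¹ * S = 1 := by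
  -- Sᵀ has injective mulVec since S has full row rank
  have hSTrank : (Sᵀ).rank = d := by rw [Matrix.rank_transpose]; exact hSrank
  have hSTinj : Function.Injective Sᵀ.mulVec := by
    have h := LinearMap.finrank_range_add_finrank_ker (Sᵀ.mulVecLin)
    rw [Module.finrank_pi, Fintype.card_fin,
      show Module.finrank ℝ (LinearMap.range Sᵀ.mulVecLin) = d from hSTrank] at h
    have hker : LinearMap.ker Sᵀ.mulVecLin = ⊥ := by
      apply Submodule.finrank_eq_zero.mp
      omega
    exact LinearMap.ker_eq_bot.mp hker
  -- invertibility facts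
  have hIdet : IsUnit I.det := hI.det_pos.ne'.isUnit
  have hIinv : I * I⁻¹ = 1 := Matrix.mul_nonsing_inv I hIdet
  have hLIL : (Lᵀ * I * L).PosDef := posDef_transpose_mul_mul hI L hLinj
  have hSIS : (S * I⁻¹ * Sᵀ).PosDef := by
    have : ((Sᵀ)ᵀ * I⁻¹ * Sᵀ).PosDef := posDef_transpose_mul_mul hI.inv Sᵀ hSTinj
    rwa [transpose_transpose] at this
  have hLILinv : (Lᵀ * I * L)⁻¹ * (Lᵀ * I * L) = 1 :=
    Matrix.nonsing_inv_mul _ hLIL.det_pos.ne'.isUnit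
  have hSISinv : (S * I⁻¹ * Sᵀ) * (S * I⁻¹ * Sᵀ)⁻¹ = 1 :=
    Matrix.mul_nonsing_inv _ hSIS.det_pos.ne'.isUnit
  -- S * L = 0
  have hSL : S * L = 0 := by
    ext i j
    have h1 : L *ᵥ Pi.single j 1 ∈ Set.range L.mulVec := ⟨_, rfl⟩
    rw [hLker] at h1
    have h2 : (S * L) *ᵥ Pi.single j 1 = 0 := by
      rw [← mulVec_mulVec]; exact h1
    have h3 := congrFun h2 i
    rwa [mulVec_single_one] at h3
  set P := L * (Lᵀ * I * L)⁻¹ * Lᵀ * I with hP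
  set Q := I⁻¹ * Sᵀ * (S * I⁻¹ * Sᵀ)⁻¹ * S with hQ
  -- matrix identities
  have hPL : P * L = L := by
    rw [hP]
    calc L * (Lᵀ * I * L)⁻¹ * Lᵀ * I * L
        = L * ((Lᵀ * I * L)⁻¹ * (Lᵀ * I * L)) := by
          simp only [Matrix.mul_assoc]
      _ = L := by rw [hLILinv, Matrix.mul_one]
  have hPU : P * (I⁻¹ * Sᵀ) = 0 := by
    have h1 : I * (I⁻¹ * Sᵀ) = Sᵀ := by rw [← Matrix.mul_assoc, hIinv, Matrix.one_mul]
    have h2 : Lᵀ * Sᵀ = 0 := by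
      have := congrArg transpose hSL
      rwa [transpose_mul, transpose_zero] at this
    calc P * (I⁻¹ * Sᵀ) = L * (Lᵀ * I * L)⁻¹ * (Lᵀ * (I * (I⁻¹ * Sᵀ))) := by
          rw [hP]; simp only [Matrix.mul_assoc]
      _ = L * (Lᵀ * I * L)⁻¹ * (Lᵀ * Sᵀ) := by rw [h1]
      _ = 0 := by rw [h2, Matrix.mul_zero]
  have hQL : Q * L = 0 := by
    rw [hQ]
    calc I⁻¹ * Sᵀ * (S * I⁻¹ * Sᵀ)⁻¹ * S * L
        = I⁻¹ * Sᵀ * (S * I⁻¹ * Sᵀ)⁻¹ * (S * L) := by simp only [Matrix.mul_assoc]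
      _ = 0 := by rw [hSL, Matrix.mul_zero]
  have hQU : Q * (I⁻¹ * Sᵀ) = I⁻¹ * Sᵀ := by
    calc Q * (I⁻¹ * Sᵀ)
        = I⁻¹ * Sᵀ * ((S * I⁻¹ * Sᵀ)⁻¹ * (S * (I⁻¹ * Sᵀ))) := by
          rw [hQ]; simp only [Matrix.mul_assoc]
      _ = I⁻¹ * Sᵀ * ((S * I⁻¹ * Sᵀ)⁻¹ * (S * I⁻¹ * Sᵀ)) := by
          simp only [Matrix.mul_assoc]
      _ = I⁻¹ * Sᵀ := by
          rw [Matrix.nonsing_inv_mul _ hSIS.det_pos.ne'.isUnit, Matrix.mul_one]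
  -- key pointwise statement
  have key : ∀ v : Fin k → ℝ, (P + Q) *ᵥ v = v := by
    intro v
    set b := (S * I⁻¹ * Sᵀ)⁻¹ *ᵥ (S *ᵥ v) with hb
    set u := (I⁻¹ * Sᵀ) *ᵥ b with hu
    have hSw : S *ᵥ (v - u) = 0 := by
      have hSu : S *ᵥ u = S *ᵥ v := by
        rw [hu, hb, mulVec_mulVec, mulVec_mulVec, mulVec_mulVec]
        simp only [← Matrix.mul_assoc]
        rw [hSISinv, Matrix.one_mul]
      rw [mulVec_sub, hSu, sub_self]
    have hw : v - u ∈ Set.range L.mulVec := by rw [hLker]; exact hSw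
    obtain ⟨a, ha⟩ := hw
    have hv : v = L *ᵥ a + u := by rw [ha]; ring_nf
    rw [add_mulVec, hv]
    have hPv : P *ᵥ (L *ᵥ a + u) = L *ᵥ a := by
      rw [mulVec_add, mulVec_mulVec, hPL, hu, mulVec_mulVec, hPU, zero_mulVec, add_zero]
    have hQv : Q *ᵥ (L *ᵥ a + u) = u := by
      rw [mulVec_add, mulVec_mulVec, hQL, zero_mulVec, hu, mulVec_mulVec, hQU, zero_add]
    rw [hPv, hQv]
  -- conclude matrix equality
  ext i j
  have h := congrFun (key (Pi.single j 1)) i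
  rw [mulVec_single_one] at h
  simp only [col_apply] at h
  rw [h]
  simp [Matrix.one_apply, Pi.single_apply, eq_comm]
end

section
/- Let I be a symmetric positive definite k×k real matrix, Ṡ a d×k real matrix of full rank d with d < k, and L a k×(k−d) real matrix whose columns form a basis of the kernel of Ṡ (equivalently, of the orthogonal complement of the row space of Ṡ). Then L (Lᵀ I L)⁻¹ Lᵀ = I⁻¹ − I⁻¹ Ṡᵀ (Ṡ I⁻¹ Ṡᵀ)⁻¹ Ṡ I⁻¹. -/
open Matrix

/-- Conjugation of a positive definite real matrix by a matrix with injective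
`mulVec` yields a positive definite matrix. -/
lemma posdef_conj_aux {k m : ℕ} {A : Matrix (Fin k) (Fin k) ℝ} (hA : A.PosDef)
    (B : Matrix (Fin k) (Fin m) ℝ) (hB : Function.Injective B.mulVec) :
    (Bᵀ * A * B).PosDef := by
  refine PosDef.of_dotProduct_mulVec_pos ?_ ?_
  · have h := hA.isHermitian
    rw [Matrix.IsHermitian] at h ⊢
    rw [conjTranspose_mul, conjTranspose_mul, h, conjTranspose_eq_transpose_of_trivial,
      conjTranspose_eq_transpose_of_trivial, transpose_transpose, Matrix.mul_assoc]
  · intro x hx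
    have hBx : B.mulVec x ≠ 0 := by
      intro h
      apply hx
      apply hB
      simpa using h
    have key := hA.dotProduct_mulVec_pos hBx
    convert key using 1
    simp only [star_trivial, RCLike.re_to_real]
    rw [← mulVec_mulVec, ← mulVec_mulVec, dotProduct_mulVec, vecMul_transpose]

/-- Matrices are equal if they act equally on all vectors. -/
lemma ext_of_mulVec_aux {m n : ℕ} {A B : Matrix (Fin m) (Fin n) ℝ}
    (h : ∀ v, A.mulVec v = B.mulVec v) : A = B := by
  ext i j
  have := congrFun (h (Pi.single j 1)) i
  simpa [mulVec_single] using this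

/-- If `I` is symmetric positive definite, `Ṡ` is `d×k` of full rank `d < k`, and the
columns of `L` form a basis of the kernel of `Ṡ`, then
`L (Lᵀ I L)⁻¹ Lᵀ = I⁻¹ − I⁻¹ Ṡᵀ (Ṡ I⁻¹ Ṡᵀ)⁻¹ Ṡ I⁻¹`. -/
theorem constrained_bound_two_forms
    {k d : ℕ} (hdk : d < k)
    (I : Matrix (Fin k) (Fin k) ℝ) (hI : I.PosDef)
    (S : Matrix (Fin d) (Fin k) ℝ) (hSrank : S.rank = d)
    (L : Matrix (Fin k) (Fin (k - d)) ℝ)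
    (hLinj : Function.Injective L.mulVec)
    (hLker : Set.range L.mulVec = {v | S.mulVec v = 0}) :
    L * (Lᵀ * I * L)⁻¹ * Lᵀ
      = I⁻¹ - I⁻¹ * Sᵀ * (S * I⁻¹ * Sᵀ)⁻¹ * S * I⁻¹ := by
  have hIdet : IsUnit I.det := (Matrix.isUnit_iff_isUnit_det I).mp hI.isUnit
  have hIinv : I⁻¹.PosDef := hI.inv
  have hA : (Lᵀ * I * L).PosDef := posdef_conj_aux hI L hLinj
  -- `Sᵀ` has injective `mulVec` since `rank S = d`
  have hSTinj : Function.Injective (Sᵀ).mulVec := by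
    have hrank : (Sᵀ).rank = d := by rw [rank_transpose]; exact hSrank
    rw [Matrix.rank] at hrank
    have hker : LinearMap.ker (Sᵀ).mulVecLin = ⊥ := by
      have hrn := LinearMap.finrank_range_add_finrank_ker (Sᵀ).mulVecLin
      rw [hrank] at hrn
      have hd : Module.finrank ℝ (Fin d → ℝ) = d := by simp
      have : Module.finrank ℝ (LinearMap.ker (Sᵀ).mulVecLin) = 0 := by omega
      exact Submodule.finrank_eq_zero.mp this
    intro x y hxy
    exact (LinearMap.ker_eq_bot.mp hker)
      (by rw [mulVecLin_apply, mulVecLin_apply]; exact hxy)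
  have hB : (S * I⁻¹ * Sᵀ).PosDef := by
    have := posdef_conj_aux hIinv Sᵀ hSTinj
    simpa using this
  have hAdet : IsUnit (Lᵀ * I * L).det := (Matrix.isUnit_iff_isUnit_det _).mp hA.isUnit
  have hBdet : IsUnit (S * I⁻¹ * Sᵀ).det := (Matrix.isUnit_iff_isUnit_det _).mp hB.isUnit
  have hSL : S * L = 0 := by
    apply ext_of_mulVec_aux
    intro v
    have hmem : L.mulVec v ∈ {w | S.mulVec w = 0} := by
      rw [← hLker]; exact ⟨v, rfl⟩
    simpa [← mulVec_mulVec] using hmem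
  set A := Lᵀ * I * L with hAdef
  set B := S * I⁻¹ * Sᵀ with hBdef
  set R := I⁻¹ * Sᵀ * B⁻¹ * S with hRdef
  set M := L * A⁻¹ * Lᵀ * I with hMdef
  have hLtSt : Lᵀ * Sᵀ = 0 := by
    have h : (S * L)ᵀ = (0 : Matrix (Fin (k - d)) (Fin d) ℝ) := by rw [hSL]; simp
    rw [transpose_mul] at h
    exact h
  have hMR : M * R = 0 := by
    have h1 : M * R = L * (A⁻¹ * (Lᵀ * (I * (I⁻¹ * (Sᵀ * (B⁻¹ * S)))))) := by
      simp only [hMdef, hRdef, Matrix.mul_assoc]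
    rw [h1, Matrix.mul_nonsing_inv_cancel_left _ _ hIdet, ← Matrix.mul_assoc Lᵀ Sᵀ, hLtSt]
    simp
  have hML : M * L = L := by
    have h1 : M * L = L * (A⁻¹ * A) := by
      simp only [hMdef, hAdef, Matrix.mul_assoc]
    rw [h1, Matrix.nonsing_inv_mul _ hAdet, Matrix.mul_one]
  have hSR : S * R = S := by
    have h1 : S * R = B * (B⁻¹ * S) := by
      simp only [hRdef, hBdef, Matrix.mul_assoc]
    rw [h1, Matrix.mul_nonsing_inv_cancel_left _ _ hBdet]
  have key : M = 1 - R := by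
    apply ext_of_mulVec_aux
    intro v
    have hSw : S.mulVec (v - R.mulVec v) = 0 := by
      rw [Matrix.mulVec_sub, mulVec_mulVec, hSR, sub_self]
    obtain ⟨a, ha⟩ : v - R.mulVec v ∈ Set.range L.mulVec := by
      rw [hLker]; exact hSw
    have h1 : M.mulVec v = M.mulVec (v - R.mulVec v) + M.mulVec (R.mulVec v) := by
      rw [← Matrix.mulVec_add, sub_add_cancel]
    have h2 : M.mulVec (v - R.mulVec v) = v - R.mulVec v := by
      rw [← ha, mulVec_mulVec, hML]
    have h3 : M.mulVec (R.mulVec v) = 0 := by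
      rw [mulVec_mulVec, hMR, Matrix.zero_mulVec]
    rw [h1, h2, h3, add_zero, Matrix.sub_mulVec, Matrix.one_mulVec]
  have final := congrArg (fun X => X * I⁻¹) key
  have hL : M * I⁻¹ = L * A⁻¹ * Lᵀ := by
    rw [hMdef, Matrix.mul_nonsing_inv_cancel_right _ _ hIdet]
  rw [hL, Matrix.sub_mul, Matrix.one_mul] at final
  rw [final, hRdef]
end

section
/- Let I be a symmetric positive definite k×k real matrix, Ṡ a d×k real matrix of full rank d with d < k, and L a k×(k−d) real matrix whose columns form a basis of the kernel of Ṡ. Then the matrix L (Lᵀ I L)⁻¹ Lᵀ = I⁻¹ − I⁻¹ Ṡᵀ (Ṡ I⁻¹ Ṡᵀ)⁻¹ Ṡ I⁻¹ is symmetric positive semidefinite of rank exactly k − d. -/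
open Matrix Module

/-- If `I` is symmetric positive definite, `Ṡ` is `d×k` of full rank `d < k`, and the
columns of `L` form a basis of the kernel of `Ṡ`, then
`L (Lᵀ I L)⁻¹ Lᵀ = I⁻¹ − I⁻¹ Ṡᵀ (Ṡ I⁻¹ Ṡᵀ)⁻¹ Ṡ I⁻¹` is symmetric positive
semidefinite of rank exactly `k − d`. -/
theorem constrained_bound_posSemidef_rank
    {k d : ℕ} (hdk : d < k)
    (I : Matrix (Fin k) (Fin k) ℝ) (hI : I.PosDef)
    (S : Matrix (Fin d) (Fin k) ℝ) (hSrank : S.rank = d)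
    (L : Matrix (Fin k) (Fin (k - d)) ℝ)
    (hLinj : Function.Injective L.mulVec)
    (hLker : Set.range L.mulVec = {v | S.mulVec v = 0}) :
    L * (Lᵀ * I * L)⁻¹ * Lᵀ = I⁻¹ - I⁻¹ * Sᵀ * (S * I⁻¹ * Sᵀ)⁻¹ * S * I⁻¹ ∧
      (L * (Lᵀ * I * L)⁻¹ * Lᵀ).PosSemidef ∧
      (L * (Lᵀ * I * L)⁻¹ * Lᵀ).rank = k - d := by
  classical
  have hIdet : IsUnit I.det := hI.det_pos.ne'.isUnit
  have hJ : (I⁻¹).PosDef := hI.inv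
  -- S * L = 0
  have hSL : S * L = 0 := by
    ext i j
    have hmem : Lᵀ j ∈ Set.range L.mulVec := ⟨Pi.single j 1, Matrix.mulVec_single_one L j⟩
    rw [hLker] at hmem
    have h0 := congrFun hmem i
    simpa [Matrix.mul_apply, Matrix.mulVec, dotProduct] using h0
  have hLS : Lᵀ * Sᵀ = 0 := by
    rw [← Matrix.transpose_mul, hSL, Matrix.transpose_zero]
  -- Sᵀ has injective mulVec
  have hSTinjL : Function.Injective (Sᵀ).mulVecLin := by
    rw [← LinearMap.ker_eq_bot, ← Submodule.finrank_eq_zero]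
    have h1 := LinearMap.finrank_range_add_finrank_ker (Sᵀ).mulVecLin
    have h2 : finrank ℝ (LinearMap.range (Sᵀ).mulVecLin) = d := by
      change (Sᵀ).rank = d
      rw [Matrix.rank_transpose, hSrank]
    rw [h2, Module.finrank_fin_fun] at h1
    omega
  have hSTinj : Function.Injective (Sᵀ).mulVec := hSTinjL
  -- conjugation of a PosDef matrix by an injective map is PosDef
  have key : ∀ {m : ℕ} (A : Matrix (Fin k) (Fin k) ℝ), A.PosDef →
      ∀ (B : Matrix (Fin k) (Fin m) ℝ), Function.Injective B.mulVec → (Bᵀ * A * B).PosDef := by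
    intro m A hA B hB
    refine Matrix.PosDef.of_dotProduct_mulVec_pos ?_ ?_
    · have h := Matrix.isHermitian_conjTranspose_mul_mul B hA.1
      rwa [Matrix.conjTranspose_eq_transpose_of_trivial] at h
    · intro x hx
      have hBx : B.mulVec x ≠ 0 := by
        intro h
        exact hx (hB (by simpa using h))
      have h := hA.dotProduct_mulVec_pos hBx
      simpa [star_trivial, ← Matrix.mulVec_mulVec, Matrix.dotProduct_mulVec,
        Matrix.vecMul_transpose] using h
  have hLIL : (Lᵀ * I * L).PosDef := key I hI L hLinj
  have hSJS : (S * I⁻¹ * Sᵀ).PosDef := by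
    have h := key I⁻¹ hJ Sᵀ hSTinj
    rwa [Matrix.transpose_transpose] at h
  have hLILdet : IsUnit (Lᵀ * I * L).det := hLIL.det_pos.ne'.isUnit
  have hSJSdet : IsUnit (S * I⁻¹ * Sᵀ).det := hSJS.det_pos.ne'.isUnit
  have hinv1 : (Lᵀ * I * L)⁻¹ * (Lᵀ * I * L) = 1 := Matrix.nonsing_inv_mul _ hLILdet
  have hinv2 : (S * I⁻¹ * Sᵀ)⁻¹ * (S * I⁻¹ * Sᵀ) = 1 := Matrix.nonsing_inv_mul _ hSJSdet
  set P := L * (Lᵀ * I * L)⁻¹ * Lᵀ with hP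
  set R := I⁻¹ * Sᵀ * (S * I⁻¹ * Sᵀ)⁻¹ * S with hR
  have hIJSt : I * (I⁻¹ * Sᵀ) = Sᵀ := by
    rw [← Matrix.mul_assoc, Matrix.mul_nonsing_inv _ hIdet, Matrix.one_mul]
  have hPIL : P * I * L = L := by
    calc P * I * L = L * ((Lᵀ * I * L)⁻¹ * (Lᵀ * I * L)) := by
          simp only [hP, Matrix.mul_assoc]
      _ = L := by rw [hinv1, Matrix.mul_one]
  have hPSt : P * Sᵀ = 0 := by
    calc P * Sᵀ = L * ((Lᵀ * I * L)⁻¹ * (Lᵀ * Sᵀ)) := by simp only [hP, Matrix.mul_assoc]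
      _ = 0 := by rw [hLS, Matrix.mul_zero, Matrix.mul_zero]
  have hRL : R * L = 0 := by
    calc R * L = I⁻¹ * (Sᵀ * ((S * I⁻¹ * Sᵀ)⁻¹ * (S * L))) := by
          simp only [hR, Matrix.mul_assoc]
      _ = 0 := by rw [hSL, Matrix.mul_zero, Matrix.mul_zero, Matrix.mul_zero]
  have hRJSt : R * (I⁻¹ * Sᵀ) = I⁻¹ * Sᵀ := by
    calc R * (I⁻¹ * Sᵀ) = I⁻¹ * Sᵀ * ((S * I⁻¹ * Sᵀ)⁻¹ * (S * I⁻¹ * Sᵀ)) := by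
          simp only [hR, Matrix.mul_assoc]
      _ = I⁻¹ * Sᵀ := by rw [hinv2, Matrix.mul_one]
  have hPIJSt : P * I * (I⁻¹ * Sᵀ) = 0 := by
    rw [Matrix.mul_assoc P I, hIJSt, hPSt]
  -- the combined matrix B
  set B : Matrix (Fin k) (Fin (k - d) ⊕ Fin d) ℝ := Matrix.fromCols L (I⁻¹ * Sᵀ) with hB
  have h1 : (P * I + R) * L = L := by rw [Matrix.add_mul, hPIL, hRL, add_zero]
  have h2 : (P * I + R) * (I⁻¹ * Sᵀ) = I⁻¹ * Sᵀ := by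
    rw [Matrix.add_mul, hPIJSt, hRJSt, zero_add]
  have hTB : (P * I + R) * B = B := by rw [hB, Matrix.mul_fromCols, h1, h2]
  -- B is injective
  have hBinj : ∀ v : (Fin (k - d) ⊕ Fin d) → ℝ, B.mulVec v = 0 → v = 0 := by
    intro v hv
    set y : Fin (k - d) → ℝ := v ∘ Sum.inl with hy
    set z : Fin d → ℝ := v ∘ Sum.inr with hz
    have hvel : v = Sum.elim y z := by
      funext p; cases p <;> rfl
    rw [hvel, hB, Matrix.fromCols_mulVec_sumElim] at hv
    -- multiply by Lᵀ * I
    have hLIJ : Lᵀ * I * (I⁻¹ * Sᵀ) = 0 := by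
      rw [Matrix.mul_assoc Lᵀ I, hIJSt, hLS]
    have hy0 : y = 0 := by
      have h := congrArg (fun w => (Lᵀ * I).mulVec w) hv
      simp only [Matrix.mulVec_add, Matrix.mulVec_mulVec, Matrix.mulVec_zero] at h
      rw [show Lᵀ * I * L = Lᵀ * I * L from rfl] at h
      have h' : (Lᵀ * I * L).mulVec y + (Lᵀ * I * (I⁻¹ * Sᵀ)).mulVec z = 0 := by
        simpa [Matrix.mulVec_mulVec] using h
      rw [hLIJ, Matrix.zero_mulVec, add_zero] at h'
      have hinj : Function.Injective (Lᵀ * I * L).mulVec :=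
        Matrix.mulVec_injective_iff_isUnit.mpr hLIL.isUnit
      exact hinj (by simpa using h')
    rw [hy0, Matrix.mulVec_zero, zero_add] at hv
    have hz0 : z = 0 := by
      have h := congrArg (fun w => I.mulVec w) hv
      simp only [Matrix.mulVec_mulVec, Matrix.mulVec_zero] at h
      rw [hIJSt] at h
      exact hSTinj (by simpa using h)
    rw [hvel, hy0, hz0]
    simp
  -- reindex B to a square matrix
  have hkd : (k - d) + d = k := Nat.sub_add_cancel hdk.le
  let e : (Fin (k - d) ⊕ Fin d) ≃ Fin k := finSumFinEquiv.trans (finCongr hkd)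
  set B' : Matrix (Fin k) (Fin k) ℝ := B.submatrix id e.symm with hB'
  have hB'mv : ∀ w : Fin k → ℝ, B'.mulVec w = B.mulVec (w ∘ e) := by
    intro w
    rw [hB', show (id : Fin k → Fin k) = ⇑(Equiv.refl (Fin k)) from rfl,
      Matrix.submatrix_mulVec_equiv]
    simp
  have hB'unit : IsUnit B' := by
    rw [← Matrix.mulVec_injective_iff_isUnit]
    intro v w hvw
    rw [hB'mv, hB'mv] at hvw
    have h0 : B.mulVec (v ∘ e - w ∘ e) = 0 := by
      rw [Matrix.mulVec_sub, hvw, sub_self]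
    have := hBinj _ h0
    funext i
    have := congrFun this (e.symm i)
    simpa [sub_eq_zero] using this
  have hB'surj : Function.Surjective B'.mulVec :=
    Matrix.mulVec_surjective_iff_isUnit.mpr hB'unit
  -- conclude P * I + R = 1
  have hT1 : P * I + R = 1 := by
    have hmv : ∀ v : Fin k → ℝ, (P * I + R).mulVec v = v := by
      intro v
      obtain ⟨w, hw⟩ := hB'surj v
      rw [← hw, hB'mv, Matrix.mulVec_mulVec, hTB]
    refine Matrix.toLin'.injective (LinearMap.ext fun v => ?_)
    simpa [Matrix.toLin'_apply, Matrix.add_mulVec] using hmv v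
  -- first conjunct
  have hmain : P = I⁻¹ - I⁻¹ * Sᵀ * (S * I⁻¹ * Sᵀ)⁻¹ * S * I⁻¹ := by
    have h := congrArg (fun M => M * I⁻¹) hT1
    simp only [Matrix.add_mul, Matrix.one_mul] at h
    have hPI : P * I * I⁻¹ = P := by
      rw [Matrix.mul_assoc, Matrix.mul_nonsing_inv _ hIdet, Matrix.mul_one]
    rw [hPI] at h
    have := eq_sub_of_add_eq h
    rw [this, hR]
  -- positive semidefinite
  have hpsd : P.PosSemidef := by
    have h := hLIL.inv.posSemidef.mul_mul_conjTranspose_same L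
    rw [Matrix.conjTranspose_eq_transpose_of_trivial] at h
    exact h
  -- rank
  have hLinjL : Function.Injective L.mulVecLin := hLinj
  have hrankL : L.rank = k - d := by
    rw [Matrix.rank, LinearMap.finrank_range_of_inj hLinjL, Module.finrank_fin_fun]
  have hrank1 : P.rank ≤ L.rank := by
    calc P.rank = ((L * (Lᵀ * I * L)⁻¹) * Lᵀ).rank := by rw [hP]
      _ ≤ (L * (Lᵀ * I * L)⁻¹).rank := Matrix.rank_mul_le_left _ _
      _ ≤ L.rank := Matrix.rank_mul_le_left _ _
  have hrank2 : L.rank ≤ P.rank := by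
    have hL : L = P * (I * L) := by rw [← Matrix.mul_assoc, hPIL]
    calc L.rank = (P * (I * L)).rank := by rw [← hL]
      _ ≤ P.rank := Matrix.rank_mul_le_left _ _
  refine ⟨hmain, hpsd, ?_⟩
  exact (le_antisymm hrank1 hrank2).trans hrankL
end

section
/- Let I be a symmetric positive definite k×k real matrix, R a k×d real matrix of full column rank d with d < k, L a k×(k−d) real matrix whose columns form a basis of the orthogonal complement of the column space of R, and α ∈ ℝ^k a fixed vector. Then for every θ̂ ∈ ℝ^k, θ̂ − I⁻¹ R (Rᵀ I⁻¹ R)⁻¹ Rᵀ (θ̂ − α) = α + L (Lᵀ I L)⁻¹ Lᵀ I (θ̂ − α); i.e., the constrained estimator of the linear case can be written in either of these two equivalent forms. -/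
open Matrix

lemma aux_conj_posDef {n m : ℕ} {M : Matrix (Fin n) (Fin n) ℝ} (hM : M.PosDef)
    (B : Matrix (Fin n) (Fin m) ℝ) (hB : Function.Injective B.mulVec) :
    (Bᵀ * M * B).PosDef := by
  refine Matrix.PosDef.of_dotProduct_mulVec_pos ?_ (fun x hx => ?_)
  · have h : Mᵀ = M := by
      have := hM.1
      rwa [Matrix.IsHermitian, Matrix.conjTranspose_eq_transpose_of_trivial] at this
    rw [Matrix.IsHermitian, Matrix.conjTranspose_eq_transpose_of_trivial]
    simp [Matrix.transpose_mul, h, Matrix.mul_assoc]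
  · have hBx : B *ᵥ x ≠ 0 := by
      intro h
      exact hx (hB (by simpa using h))
    have h2 := hM.dotProduct_mulVec_pos hBx
    have hrw : star x ⬝ᵥ (Bᵀ * M * B) *ᵥ x = star (B *ᵥ x) ⬝ᵥ M *ᵥ (B *ᵥ x) := by
      rw [← Matrix.mulVec_mulVec, ← Matrix.mulVec_mulVec, Matrix.dotProduct_mulVec,
        Matrix.vecMul_transpose, star_trivial, star_trivial]
    rw [hrw]; exact h2

/-- Linear constraint case: if `I` is symmetric positive definite, `R` is `k×d` of full
column rank `d < k`, and the columns of `L` form a basis of the orthogonal complement of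
the column space of `R` (i.e. of the kernel of `Rᵀ`), then for all `θ̂, α ∈ ℝ^k`,
`θ̂ − I⁻¹ R (Rᵀ I⁻¹ R)⁻¹ Rᵀ (θ̂ − α) = α + L (Lᵀ I L)⁻¹ Lᵀ I (θ̂ − α)`. -/
theorem linear_constrained_estimator_two_forms
    {k d : ℕ} (hdk : d < k)
    (I : Matrix (Fin k) (Fin k) ℝ) (hI : I.PosDef)
    (R : Matrix (Fin k) (Fin d) ℝ) (hRinj : Function.Injective R.mulVec)
    (L : Matrix (Fin k) (Fin (k - d)) ℝ)
    (hLinj : Function.Injective L.mulVec)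
    (hLperp : Set.range L.mulVec = {v : Fin k → ℝ | Rᵀ.mulVec v = 0})
    (α θhat : Fin k → ℝ) :
    θhat - (I⁻¹ * R * (Rᵀ * I⁻¹ * R)⁻¹ * Rᵀ).mulVec (θhat - α)
      = α + (L * (Lᵀ * I * L)⁻¹ * Lᵀ * I).mulVec (θhat - α) := by
  set x := θhat - α with hx
  set P := I⁻¹ * R * (Rᵀ * I⁻¹ * R)⁻¹ * Rᵀ with hP
  set Q := L * (Lᵀ * I * L)⁻¹ * Lᵀ * I with hQ
  -- invertibility facts
  have hApos : (Rᵀ * I⁻¹ * R).PosDef := by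
    have := aux_conj_posDef hI.inv R hRinj
    rwa [Matrix.mul_assoc] at this ⊢
  have hCpos : (Lᵀ * I * L).PosDef := by
    have := aux_conj_posDef hI L hLinj
    rwa [Matrix.mul_assoc] at this ⊢
  have hA : (Rᵀ * I⁻¹ * R) * (Rᵀ * I⁻¹ * R)⁻¹ = 1 :=
    Matrix.mul_nonsing_inv _ (isUnit_iff_ne_zero.mpr hApos.det_pos.ne')
  have hC : (Lᵀ * I * L) * (Lᵀ * I * L)⁻¹ = 1 :=
    Matrix.mul_nonsing_inv _ (isUnit_iff_ne_zero.mpr hCpos.det_pos.ne')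
  have hII : I * I⁻¹ = 1 :=
    Matrix.mul_nonsing_inv _ (isUnit_iff_ne_zero.mpr hI.det_pos.ne')
  -- Rᵀ L = 0
  have hRL : Rᵀ * L = 0 := by
    ext i j
    have h0 : Rᵀ *ᵥ (L *ᵥ Pi.single j 1) = 0 := by
      have : L *ᵥ Pi.single j 1 ∈ Set.range L.mulVec := ⟨_, rfl⟩
      rw [hLperp] at this
      exact this
    rw [Matrix.mulVec_mulVec] at h0
    have := congrFun h0 i
    simpa [Matrix.mulVec_single] using this
  have hLR : Lᵀ * R = 0 := by
    have := congrArg Matrix.transpose hRL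
    simpa using this
  -- key matrix identities
  have h1 : Rᵀ * P = Rᵀ := by
    rw [hP]
    simp only [← Matrix.mul_assoc]
    rw [hA, Matrix.one_mul]
  have h2 : Rᵀ * Q = 0 := by
    rw [hQ]
    simp only [← Matrix.mul_assoc]
    rw [hRL]
    simp
  have h3 : Lᵀ * I * P = 0 := by
    rw [hP]
    simp only [← Matrix.mul_assoc]
    rw [Matrix.mul_assoc (Lᵀ) I I⁻¹, hII, Matrix.mul_one, hLR]
    simp
  have h4 : Lᵀ * I * Q = Lᵀ * I := by
    rw [hQ]
    simp only [← Matrix.mul_assoc]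
    have : Lᵀ * I * L * (Lᵀ * I * L)⁻¹ * Lᵀ * I = (Lᵀ * I * L * (Lᵀ * I * L)⁻¹) * Lᵀ * I := by
      simp only [← Matrix.mul_assoc]
    rw [this, hC, Matrix.one_mul]
  -- the residual g
  set g := x - P *ᵥ x - Q *ᵥ x with hg
  have hRg : Rᵀ *ᵥ g = 0 := by
    rw [hg]
    simp only [Matrix.mulVec_sub, Matrix.mulVec_mulVec, h1, h2]
    simp
  have hgrange : g ∈ Set.range L.mulVec := by
    rw [hLperp]; exact hRg
  obtain ⟨c, hc⟩ := hgrange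
  have hLIg : (Lᵀ * I) *ᵥ g = 0 := by
    rw [hg]
    simp only [Matrix.mulVec_sub, Matrix.mulVec_mulVec, ← Matrix.mul_assoc, h3, h4]
    simp
  have hCc : (Lᵀ * I * L) *ᵥ c = 0 := by
    rw [← Matrix.mulVec_mulVec, hc, hLIg]
  have hc0 : c = 0 := by
    have hinj : Function.Injective (Lᵀ * I * L).mulVec :=
      Matrix.mulVec_injective_iff_isUnit.mpr
        ((Matrix.isUnit_iff_isUnit_det _).mpr (isUnit_iff_ne_zero.mpr hCpos.det_pos.ne'))
    apply hinj
    simpa using hCc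
  have hg0 : g = 0 := by rw [← hc, hc0, Matrix.mulVec_zero]
  have key : x - P *ᵥ x = Q *ᵥ x := by
    have := sub_eq_zero.mp hg0
    linear_combination (norm := abel) this
  rw [← key, hx]
  abel
end
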